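/- Let f be a function analytic in a neighborhood of 0 (or a formal power series) with f(0) = 1 satisfying f'(z) = -f(-z)² for all z. Then f(z)³ + f(-z)³ = 2 for all z in the domain. -/

import Mathlib

theorem stmt_2 (f : ℝ → ℝ) (ε : ℝ) (hε : 0 < ε) (h0 : f 0 = 1)
    (hf : ∀ z ∈ Set.Ioo (-ε) ε, HasDerivAt f (-(f (-z)) ^ 2) z) :
    ∀ z ∈ Set.Ioo (-ε) ε, (f z) ^ 3 + (f (-z)) ^ 3 = 2 := by
  intro z hz
  set s := Set.Ioo (-ε) ε with hs
  have hopen : IsOpen s := isOpen_Ioo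
  have hneg : ∀ x ∈ s, -x ∈ s := by
    intro x hx
    simp only [hs, Set.mem_Ioo] at hx ⊢
    constructor <;> linarith [hx.1, hx.2]
  set g : ℝ → ℝ := fun z => f z ^ 3 + f (-z) ^ 3 with hgdef
  have hg : ∀ x ∈ s, HasDerivAt g 0 x := by
    intro x hx
    have h1 := hf x hx
    have h2 := hf (-x) (hneg x hx)
    rw [neg_neg] at h2
    have h2' : HasDerivAt (fun z => f (-z)) ((-(f x) ^ 2) * (-1)) x :=
      h2.comp x (hasDerivAt_neg x)
    have h3 : HasDerivAt (fun z => f z ^ 3 + f (-z) ^ 3) _ x := (h1.pow 3).add (h2'.pow 3)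
    convert h3 using 1
    push_cast
    ring
  have h0s : (0 : ℝ) ∈ s := by
    simp only [hs, Set.mem_Ioo]
    constructor <;> linarith
  have hconst : g z = g 0 := by
    apply (convex_Ioo (-ε) ε).is_const_of_fderivWithin_eq_zero
      (fun x hx => ((hg x hx).differentiableAt).differentiableWithinAt)
      ?_ hz h0s
    intro x hx
    rw [fderivWithin_of_isOpen hopen hx, (hg x hx).hasFDerivAt.fderiv]
    ext
    simp
  have : g 0 = 2 := by simp [hgdef, h0]; norm_num
  calc f z ^ 3 + f (-z) ^ 3 = g z := rfl
    _ = g 0 := hconst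
    _ = 2 := this
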